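/- Let λ : Mₙ(ℂ) → ℂ be linear with λ(AB) = λ(BA), and suppose λ(P) ∈ ℤ for every idempotent matrix P (P² = P). Then for any invertible matrix A admitting two spectral cuts θ, φ (no eigenvalues on the rays L_θ, L_φ), exp(λ(log_θ A)) = exp(λ(log_φ A)), i.e. the determinant Det^λ(A) = exp(λ(log_θ A)) is independent of the choice of spectral cut. -/

import Mathlib

set_option linter.unusedVariables false

open NormedSpace

noncomputable def detCM (m : ℕ) : ContinuousMultilinearMap ℂ (fun _ : Fin m => (Fin m → ℂ)) ℂ :=
  MultilinearMap.mkContinuous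
    ((Matrix.detRowAlternating : (Fin m → ℂ) [⋀^Fin m]→ₗ[ℂ] ℂ)).toMultilinearMap
    (Nat.factorial m) (by
      intro v
      have h : (Matrix.detRowAlternating (R := ℂ) (n := Fin m)).toMultilinearMap v
          = Matrix.det (Matrix.of v) := rfl
      rw [h, Matrix.det_apply']
      calc ‖∑ σ : Equiv.Perm (Fin m), Equiv.Perm.sign σ * ∏ i, Matrix.of v (σ i) i‖
          ≤ ∑ σ : Equiv.Perm (Fin m), ‖(Equiv.Perm.sign σ : ℂ) * ∏ i, Matrix.of v (σ i) i‖ :=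
            norm_sum_le _ _
        _ ≤ ∑ _σ : Equiv.Perm (Fin m), ∏ i, ‖v i‖ := by
            refine Finset.sum_le_sum fun σ _ => ?_
            rw [norm_mul]
            have hs : ‖((Equiv.Perm.sign σ : ℤ) : ℂ)‖ = 1 := by
              rcases Int.units_eq_one_or (Equiv.Perm.sign σ) with h' | h' <;> simp [h']
            rw [hs, one_mul]
            calc ‖∏ i, Matrix.of v (σ i) i‖ = ∏ i, ‖v (σ i) i‖ := by
                  rw [norm_prod]; rfl
              _ ≤ ∏ i, ‖v (σ i)‖ := by
                  refine Finset.prod_le_prod (fun _ _ => norm_nonneg _) fun i _ => ?_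
                  exact norm_le_pi_norm (v (σ i)) i
              _ = ∏ i, ‖v i‖ := Equiv.prod_comp σ (fun i => ‖v i‖)
        _ = (Nat.factorial m : ℝ) * ∏ i, ‖v i‖ := by
            rw [Finset.sum_const, Finset.card_univ, Fintype.card_perm, Fintype.card_fin,
              nsmul_eq_mul])

lemma det_updateRow_one {m : ℕ} (i : Fin m) (v : Fin m → ℂ) :
    Matrix.det ((1 : Matrix (Fin m) (Fin m) ℂ).updateRow i v) = v i := by
  set D := (Matrix.detRowAlternating : (Fin m → ℂ) [⋀^Fin m]→ₗ[ℂ] ℂ).toMultilinearMap with hD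
  have hv : v = ∑ j : Fin m, v j • (1 : Matrix (Fin m) (Fin m) ℂ) j := by
    funext k
    simp [Finset.sum_apply, Matrix.one_apply]
  have h : ∀ w : Fin m → ℂ,
      Matrix.det ((1 : Matrix (Fin m) (Fin m) ℂ).updateRow i w)
        = D (Function.update (1 : Matrix (Fin m) (Fin m) ℂ) i w) := fun w => rfl
  rw [h, hv]
  erw [MultilinearMap.map_update_sum]
  have hterm : ∀ j : Fin m,
      D (Function.update (1 : Matrix (Fin m) (Fin m) ℂ) i
        (v j • (1 : Matrix (Fin m) (Fin m) ℂ) j)) = if i = j then v j else 0 := by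
    intro j
    erw [MultilinearMap.map_update_smul]
    split_ifs with hij
    · subst hij
      have h2 : Function.update (1 : Matrix (Fin m) (Fin m) ℂ) i ((1 : Matrix (Fin m) (Fin m) ℂ) i)
          = (1 : Matrix (Fin m) (Fin m) ℂ) := Function.update_eq_self _ _
      rw [h2]
      have h3 : D (1 : Matrix (Fin m) (Fin m) ℂ) = 1 := Matrix.det_one
      rw [h3, smul_eq_mul, mul_one]
    · have h4 : D (Function.update (1 : Matrix (Fin m) (Fin m) ℂ) i
          ((1 : Matrix (Fin m) (Fin m) ℂ) j)) = 0 := by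
        refine Matrix.det_zero_of_row_eq hij ?_
        show Function.update (1 : Matrix (Fin m) (Fin m) ℂ) i ((1:Matrix (Fin m) (Fin m) ℂ) j) i
            = Function.update (1 : Matrix (Fin m) (Fin m) ℂ) i ((1:Matrix (Fin m) (Fin m) ℂ) j) j
        erw [Function.update_self, Function.update_of_ne (Ne.symm hij)]
      rw [h4, smul_zero]
  simp only [hterm]
  simp [Matrix.one_apply]

lemma det_exp {m : ℕ} (L : Matrix (Fin m) (Fin m) ℂ) :
    (NormedSpace.exp L).det = Complex.exp (Matrix.trace L) := by
  letI : SeminormedRing (Matrix (Fin m) (Fin m) ℂ) := Matrix.linftyOpSemiNormedRing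
  letI : NormedRing (Matrix (Fin m) (Fin m) ℂ) := Matrix.linftyOpNormedRing
  letI : NormedAlgebra ℂ (Matrix (Fin m) (Fin m) ℂ) := Matrix.linftyOpNormedAlgebra
  letI : CompleteSpace (Matrix (Fin m) (Fin m) ℂ) := FiniteDimensional.complete ℂ _
  set k : ℂ → ℂ := fun t => (NormedSpace.exp (t • L)).det with hkdef
  let lin : Matrix (Fin m) (Fin m) ℂ →ₗ[ℂ] (Fin m → Fin m → ℂ) :=
    { toFun := fun M => M, map_add' := fun _ _ => rfl, map_smul' := fun _ _ => rfl }
  let linC : Matrix (Fin m) (Fin m) ℂ →L[ℂ] (Fin m → Fin m → ℂ) :=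
    LinearMap.toContinuousLinearMap lin
  have hdet : HasFDerivAt (fun M : Matrix (Fin m) (Fin m) ℂ => M.det)
      (((detCM m).linearDeriv (linC 1)).comp linC) 1 := by
    have h1 := (detCM m).hasFDerivAt (x := linC 1)
    have h2 : HasFDerivAt linC linC (1 : Matrix (Fin m) (Fin m) ℂ) := linC.hasFDerivAt
    exact h1.comp 1 h2
  have hval : (((detCM m).linearDeriv (linC 1)).comp linC) L = Matrix.trace L := by
    rw [ContinuousLinearMap.comp_apply, ContinuousMultilinearMap.linearDeriv_apply]
    have hterm : ∀ i : Fin m,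
        (detCM m) (Function.update (linC 1) i (linC L i)) = L i i := by
      intro i
      have : (detCM m) (Function.update (linC 1) i (linC L i))
          = Matrix.det ((1 : Matrix (Fin m) (Fin m) ℂ).updateRow i (L i)) := rfl
      rw [this, det_updateRow_one]
    simp only [hterm]
    rfl
  have e0 : NormedSpace.exp ((0:ℂ) • L) = (1 : Matrix (Fin m) (Fin m) ℂ) := by
    rw [zero_smul, exp_zero]
  have h3 : HasDerivAt (fun t : ℂ => NormedSpace.exp (t • L)) L 0 := by
    have := hasDerivAt_exp_smul_const (𝕂 := ℂ) L (0 : ℂ)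
    erw [e0, one_mul] at this
    exact this
  have hk0 : HasDerivAt k (Matrix.trace L) 0 := by
    rw [← e0] at hdet
    have := hdet.comp_hasDerivAt (0 : ℂ) h3
    rw [e0] at this
    refine this.congr_deriv ?_
    exact hval
  have hmul : ∀ s r : ℂ, k (s + r) = k s * k r := by
    intro s r
    have hcomm : Commute (s • L) (r • L) := ((Commute.refl L).smul_left s).smul_right r
    show (NormedSpace.exp ((s + r) • L)).det = _
    rw [add_smul, Matrix.exp_add_of_commute _ _ hcomm, Matrix.det_mul]
  have hkt : ∀ t : ℂ, HasDerivAt k (Matrix.trace L * k t) t := by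
    intro t
    have h6 : HasDerivAt (fun u : ℂ => u - t) 1 t := (hasDerivAt_id t).sub_const t
    have h8 : HasDerivAt (k ∘ fun u : ℂ => u - t) (Matrix.trace L * 1) t :=
      HasDerivAt.comp t (by rwa [sub_self]) h6
    have h9 : HasDerivAt (fun u : ℂ => k t * k (u - t)) (k t * (Matrix.trace L * 1)) t :=
      h8.const_mul (k t)
    have hrepr : (fun u : ℂ => k t * k (u - t)) = k := by
      funext u
      rw [← hmul, add_sub_cancel]
    rw [hrepr] at h9
    simpa [mul_comm] using h9
  set F : ℂ → ℂ := fun t => k t * Complex.exp (-(Matrix.trace L) * t) with hFdef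
  have hF : ∀ t : ℂ, HasDerivAt F 0 t := by
    intro t
    have he : HasDerivAt (fun t : ℂ => Complex.exp (-(Matrix.trace L) * t))
        (Complex.exp (-(Matrix.trace L) * t) * -(Matrix.trace L)) t := by
      simpa using ((hasDerivAt_id t).const_mul (-(Matrix.trace L))).cexp
    have := (hkt t).mul he
    refine this.congr_deriv ?_
    ring
  have hconst : F 1 = F 0 :=
    is_const_of_deriv_eq_zero (fun t => (hF t).differentiableAt)
      (fun t => (hF t).deriv) 1 0
  have hF0 : F 0 = 1 := by
    simp only [hFdef, hkdef, e0]
    simp [Matrix.det_one]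
  have hF1 : F 1 = (NormedSpace.exp L).det * Complex.exp (-(Matrix.trace L)) := by
    simp [hFdef, hkdef]
  rw [hF1, hF0] at hconst
  have hne : Complex.exp (-(Matrix.trace L)) ≠ 0 := Complex.exp_ne_zero _
  rw [Complex.exp_neg] at hconst
  field_simp at hconst
  linear_combination hconst

/-- If a tracial linear functional `λ` on matrices takes integer values on idempotents, then the
determinant `Det^λ (A) = exp (λ (log_θ A))` is independent of the choice of spectral cut `θ`.
Here `log_θ A` and `log_φ A` are the logarithms of `A` with respect to the spectral cuts
`0 ≤ θ < φ < 2π`, characterized as commuting logarithms of `A` whose spectra lie in the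
horizontal strips determined by the branch cuts. -/
theorem stmt18 (n : ℕ) (lam : Matrix (Fin n) (Fin n) ℂ →ₗ[ℂ] ℂ)
    (hlam : ∀ A B : Matrix (Fin n) (Fin n) ℂ, lam (A * B) = lam (B * A))
    (hint : ∀ P : Matrix (Fin n) (Fin n) ℂ, P * P = P → ∃ k : ℤ, lam P = (k : ℂ))
    (A Lθ Lφ : Matrix (Fin n) (Fin n) ℂ) (θ φ : ℝ)
    (h0θ : 0 ≤ θ) (hθφ : θ < φ) (hφ : φ < 2 * Real.pi)
    (hA : IsUnit A)
    (hrayθ : ∀ z ∈ spectrum ℂ A, ∀ r : ℝ, 0 ≤ r →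
      z ≠ (r : ℂ) * Complex.exp ((θ : ℂ) * Complex.I))
    (hrayφ : ∀ z ∈ spectrum ℂ A, ∀ r : ℝ, 0 ≤ r →
      z ≠ (r : ℂ) * Complex.exp ((φ : ℂ) * Complex.I))
    (hexpθ : NormedSpace.exp Lθ = A) (hcommθ : Commute A Lθ)
    (hspecθ : ∀ z ∈ spectrum ℂ Lθ, θ < z.im ∧ z.im < θ + 2 * Real.pi)
    (hexpφ : NormedSpace.exp Lφ = A) (hcommφ : Commute A Lφ)
    (hspecφ : ∀ z ∈ spectrum ℂ Lφ, φ < z.im ∧ z.im < φ + 2 * Real.pi) :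
    Complex.exp (lam Lθ) = Complex.exp (lam Lφ) := by
  rcases Nat.eq_zero_or_pos n with hn | hn
  · subst hn
    have : Lθ = Lφ := by ext i j; exact i.elim0
    rw [this]
  -- the distinguished index
  set i0 : Fin n := ⟨0, hn⟩ with hi0
  set E : Fin n → Fin n → Matrix (Fin n) (Fin n) ℂ :=
    fun i j => Matrix.single i j 1 with hE
  -- lam is a multiple of the trace
  obtain ⟨kc, hkc⟩ : ∃ k : ℤ, lam (E i0 i0) = (k : ℂ) := by
    refine hint _ ?_
    rw [hE]
    rw [Matrix.single_mul_single_same, mul_one]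
  have hdiag : ∀ i : Fin n, lam (E i i) = lam (E i0 i0) := by
    intro i
    have h1 : E i i = E i i0 * E i0 i := by
      rw [hE, Matrix.single_mul_single_same, mul_one]
    have h2 : E i0 i0 = E i0 i * E i i0 := by
      rw [hE, Matrix.single_mul_single_same, mul_one]
    rw [h1, hlam, ← h2]
  have hoff : ∀ i j : Fin n, i ≠ j → lam (E i j) = 0 := by
    intro i j hij
    have h1 : E i j = E i i * E i j := by
      rw [hE, Matrix.single_mul_single_same, one_mul]
    have h2 : E i j * E i i = 0 := by
      rw [hE]
      simp [Ne.symm hij]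
    rw [h1, hlam, h2, map_zero]
  have htr : ∀ X : Matrix (Fin n) (Fin n) ℂ, lam X = (kc : ℂ) * X.trace := by
    intro X
    conv_lhs => rw [Matrix.matrix_eq_sum_single X]
    rw [map_sum]
    have hterm : ∀ i : Fin n,
        lam (∑ j : Fin n, Matrix.single i j (X i j)) = X i i * (kc : ℂ) := by
      intro i
      rw [map_sum]
      have hij : ∀ j : Fin n,
          lam (Matrix.single i j (X i j)) = if i = j then X i i * (kc : ℂ) else 0 := by
        intro j
        have hsm : Matrix.single i j (X i j) = X i j • E i j := by
          rw [hE, Matrix.smul_single, smul_eq_mul, mul_one]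
        rw [hsm, map_smul, smul_eq_mul]
        split_ifs with h
        · subst h
          rw [hdiag, hkc]
        · rw [hoff i j h, mul_zero]
      simp only [hij]
      simp
    simp only [hterm]
    rw [Matrix.trace]
    rw [Finset.mul_sum]
    congr 1
    funext i
    rw [mul_comm]
    rfl
  -- determinants
  have hdθ : A.det = Complex.exp (Matrix.trace Lθ) := by rw [← hexpθ, det_exp]
  have hdφ : A.det = Complex.exp (Matrix.trace Lφ) := by rw [← hexpφ, det_exp]
  obtain ⟨mz, hmz⟩ := Complex.exp_eq_exp_iff_exists_int.mp (hdθ ▸ hdφ)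
  rw [htr Lθ, htr Lφ, hmz, mul_add, Complex.exp_add]
  have h5 : (kc : ℂ) * ((mz : ℂ) * (2 * Real.pi * Complex.I))
      = ((kc * mz : ℤ) : ℂ) * (2 * Real.pi * Complex.I) := by push_cast; ring
  rw [h5, Complex.exp_int_mul_two_pi_mul_I, mul_one]
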